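/- arXiv:0902.3387 — 5 statements merged into one kernel-verified Lean document; each statement's English description precedes it below -/
import Mathlib

section
/- Any LC^n separable metric space X is locally polyhedrally n-connected; that is, for every x ∈ X and every neighborhood V of x there is a neighborhood W of x such that the pair W ⊆ V is polyhedrally n-connected. -/
open Set Metric Topology Filter
open scoped ENNReal

noncomputable section

/-- The `n`-dimensional unit sphere, as a subspace of `ℝ^{n+1}`. -/
abbrev NSphere (n : ℕ) : Type := Metric.sphere (0 : EuclideanSpace ℝ (Fin (n + 1))) 1

/-- A continuous map `f` is null-homotopic within the set `U`: it is homotopic to a constant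
map through maps whose values stay in `U`. -/
def NullHomotopicIn {S Y : Type*} [TopologicalSpace S] [TopologicalSpace Y]
    (f : C(S, Y)) (U : Set Y) : Prop :=
  ∃ y₀ ∈ U, ∃ H : ContinuousMap.Homotopy f (ContinuousMap.const S y₀), ∀ p, H p ∈ U

/-- A pair of subspaces `V ⊆ U` of `Y` is `n`-aspheric if every continuous map of the
`n`-sphere into `V` is null-homotopic in `U`. -/
def AsphericPair (n : ℕ) {Y : Type*} [TopologicalSpace Y] (V U : Set Y) : Prop :=
  ∀ f : C(NSphere n, Y), (∀ z, f z ∈ V) → NullHomotopicIn f U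

/-- The pair `V ⊆ U` is `k`-aspheric for every `-1 ≤ k ≤ n`, where `(-1)`-asphericity
means that `U` is nonempty. -/
def AsphericPairUpTo (n : ℕ) {Y : Type*} [TopologicalSpace Y] (V U : Set Y) : Prop :=
  U.Nonempty ∧ ∀ k ≤ n, AsphericPair k V U

/-- A space is `LC^n` if every neighborhood `V` of any point contains a smaller
neighborhood `W` such that the pair `W ⊆ V` is `k`-aspheric for all `k ≤ n`. -/
def IsLC (n : ℕ) (X : Type*) [TopologicalSpace X] : Prop :=
  ∀ x : X, ∀ V ∈ 𝓝 x, ∃ W ∈ 𝓝 x, W ⊆ V ∧ AsphericPairUpTo n W V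

/-- A pair `V ⊆ U` is polyhedrally `n`-connected if for every finite `n`-dimensional
polyhedron `M` (realized as a finite simplicial complex in some Euclidean space) and every
closed subpolyhedron `A ⊆ M`, every continuous map `A → V` extends to a continuous map
`M → U`. -/
def PolyConnPair (n : ℕ) {Y : Type*} [TopologicalSpace Y] (V U : Set Y) : Prop :=
  ∀ (N : ℕ) (M A : Geometry.SimplicialComplex ℝ (EuclideanSpace ℝ (Fin N))),
    M.faces.Finite → (∀ s ∈ M.faces, s.card ≤ n + 1) → A.faces ⊆ M.faces →
    ∀ f : C(A.space, Y), (∀ a, f a ∈ V) →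
      ∃ g : C(M.space, Y), (∀ z, g z ∈ U) ∧
        ∀ (z : EuclideanSpace ℝ (Fin N)) (hA : z ∈ A.space) (hM : z ∈ M.space),
          g ⟨z, hM⟩ = f ⟨z, hA⟩

/-- An ANR: a separable metrizable space which, whenever embedded as a closed subset of a
separable metric space, is a retract of some neighborhood of itself. -/
def IsANR (X : Type*) [TopologicalSpace X] : Prop :=
  TopologicalSpace.SeparableSpace X ∧ TopologicalSpace.MetrizableSpace X ∧
    ∀ (Z : Type) [MetricSpace Z] [TopologicalSpace.SeparableSpace Z] (e : X → Z),
      IsClosedEmbedding e →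
        ∃ U : Set Z, IsOpen U ∧ Set.range e ⊆ U ∧
          ∃ r : C(U, Z), (∀ u : U, r u ∈ Set.range e) ∧
            ∀ u : U, (u : Z) ∈ Set.range e → r u = u

/-- Upper semicontinuity of a multivalued mapping. -/
def UscSetMap {X Y : Type*} [TopologicalSpace X] [TopologicalSpace Y] (F : X → Set Y) : Prop :=
  ∀ U : Set Y, IsOpen U → IsOpen {x | F x ⊆ U}

/-- A compact multivalued mapping: upper semicontinuous with compact point-images. -/
def CompactSetMap {X Y : Type*} [TopologicalSpace X] [TopologicalSpace Y] (F : X → Set Y) : Prop :=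
  UscSetMap F ∧ ∀ x, IsCompact (F x)

/-- The graph of a multivalued mapping. -/
def graphOf {X Y : Type*} (F : X → Set Y) : Set (X × Y) := {p | p.2 ∈ F p.1}

/-- The graph in `X × Y` of a multivalued mapping defined on a subset `A ⊆ X`. -/
def graphOn {X Y : Type*} (A : Set X) (Ψ : A → Set Y) : Set (X × Y) :=
  {p | ∃ h : p.1 ∈ A, p.2 ∈ Ψ ⟨p.1, h⟩}

/-- The open `ε`-neighborhood of a set `S ⊆ X × Y` with respect to the sum metric
`dist ((x,y),(x',y')) = dist x x' + dist y y'`. -/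
def SumBall {X Y : Type*} [MetricSpace X] [MetricSpace Y] (S : Set (X × Y)) (ε : ℝ) :
    Set (X × Y) :=
  {p | ∃ q ∈ S, dist p.1 q.1 + dist p.2 q.2 < ε}

/-- The gauge `cal F = sup {diam (F x)}` of a multivalued mapping, valued in `ℝ≥0∞`. -/
def calGauge {X Y : Type*} [MetricSpace Y] (Ψ : X → Set Y) : ℝ≥0∞ :=
  ⨆ x, EMetric.diam (Ψ x)

/-- A pair of compacta `K ⊆ K'` in `Y` is approximately `n`-aspheric if for some embedding
of (the subspace) `K'` into an ANR `Z`, every neighborhood `U` of the image of `K'` contains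
a neighborhood `V` of the image of `K` such that the pair `V ⊆ U` is `n`-aspheric. -/
def ApproxAsphericPair (n : ℕ) {Y : Type*} [TopologicalSpace Y] (K K' : Set Y) : Prop :=
  ∃ (Z : Type) (tZ : TopologicalSpace Z),
    letI : TopologicalSpace Z := tZ
    IsANR Z ∧
      ∃ e : K' → Z, IsEmbedding e ∧
        ∀ U : Set Z, IsOpen U → Set.range e ⊆ U →
          ∃ V : Set Z, IsOpen V ∧ e '' {p : K' | (p : Y) ∈ K} ⊆ V ∧ V ⊆ U ∧ AsphericPair n V U

/-- A subspace `S ⊆ Y` is hereditarily coconnectedly aspheric if every compactum `K ⊆ S`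
with connected complement `S \ K` is approximately aspheric (approximately `n`-aspheric for
every `n ≥ 2`). -/
def HCAset {Y : Type*} [TopologicalSpace Y] (S : Set Y) : Prop :=
  ∀ K : Set Y, K ⊆ S → IsCompact K → IsConnected (S \ K) →
    ∀ n : ℕ, 2 ≤ n → ApproxAsphericPair n K K

/-- A pair `V ⊆ U` of subsets of the space `Z` is coconnected if `Z \ U` lies in one
connected component of `Z \ V`. -/
def CoconnectedPair {Z : Type*} [TopologicalSpace Z] (V U : Set Z) : Prop :=
  ∃ C : Set Z, C ⊆ Vᶜ ∧ IsPreconnected C ∧ Uᶜ ⊆ C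

/-- A pair `V ⊆ U` of subsets of `Z ⊆ Y` is coconnected in `Z` if `Z \ U` lies in one
connected component of `Z \ V`. -/
def CoconnectedPairIn {Y : Type*} [TopologicalSpace Y] (Z V U : Set Y) : Prop :=
  ∃ C : Set Y, C ⊆ Z \ V ∧ IsPreconnected C ∧ Z \ U ⊆ C

/-- The `G₁`-coconnectification of `F₀`: the union of `F₀` and all connected components of
the complement of `F₀` which do not intersect the complement of `G₁`. -/
def coconnectification {Z : Type*} [TopologicalSpace Z] (G₁ F₀ : Set Z) : Set Z :=
  F₀ ∪ {z | z ∈ F₀ᶜ ∧ connectedComponentIn F₀ᶜ z ⊆ G₁}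

/-- The `G₁`-coconnectification of `F₀` inside the subspace `Z ⊆ Y`: the union of `F₀` and
all connected components of `Z \ F₀` which do not intersect `Z \ G₁`. -/
def coconnectificationIn {Y : Type*} [TopologicalSpace Y] (Z G₁ F₀ : Set Y) : Set Y :=
  F₀ ∪ {z | z ∈ Z \ F₀ ∧ connectedComponentIn (Z \ F₀) z ⊆ G₁}

/-- A proper ordering on subsets of `Y`. -/
def ProperOrdering {Y : Type*} (α : Set Y → Set Y → Prop) : Prop :=
  (∀ W V, α W V → W ⊆ V) ∧
    (∀ W V R, W ⊆ V → α V R → α W R) ∧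
      (∀ W V R, α W V → V ⊆ R → α W R)

/-- A multivalued mapping `F` is equi locally of type `α`. -/
def EquiLocallyOfType {X Y : Type*} [TopologicalSpace X] [TopologicalSpace Y]
    (α : Set Y → Set Y → Prop) (F : X → Set Y) : Prop :=
  ∀ x : X, ∀ y ∈ F x, ∀ V ∈ 𝓝 y, ∃ W ∈ 𝓝 y, ∃ U ∈ 𝓝 x,
    ∀ x' ∈ U, α (W ∩ F x') (V ∩ F x')

/-- A multivalued mapping is equi-`LC^n`. -/
def EquiLC (n : ℕ) {X Y : Type*} [TopologicalSpace X] [TopologicalSpace Y]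
    (F : X → Set Y) : Prop :=
  EquiLocallyOfType (fun W V => AsphericPairUpTo n W V) F

/-- A multivalued mapping is equi locally polyhedrally `n`-connected. -/
def EquiLocallyPolyConn (n : ℕ) {X Y : Type*} [TopologicalSpace X] [TopologicalSpace Y]
    (F : X → Set Y) : Prop :=
  EquiLocallyOfType (fun W V => PolyConnPair n W V) F

/-- A multivalued mapping is equi locally hereditarily coconnectedly aspheric. -/
def EquiLocallyHCA {X Y : Type*} [TopologicalSpace X] [TopologicalSpace Y]
    (F : X → Set Y) : Prop :=
  EquiLocallyOfType (fun W _ => HCAset W) F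

/-- A multivalued mapping is equi locally coconnected. -/
def EquiLocallyCoconnected {X Y : Type*} [TopologicalSpace X] [TopologicalSpace Y]
    (F : X → Set Y) : Prop :=
  ∀ x : X, ∀ y ∈ F x, ∀ V ∈ 𝓝 y, ∃ W ∈ 𝓝 y, ∃ U ∈ 𝓝 x,
    ∀ x' ∈ U, CoconnectedPairIn (F x') (W ∩ F x') (V ∩ F x')

/-- A complete multivalued mapping: there is a `Gδ` set `S` containing the graph such that
every set `{x} × G x` is (relatively) closed in `S`. -/
def CompleteSetMap {X Y : Type*} [TopologicalSpace X] [TopologicalSpace Y]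
    (G : X → Set Y) : Prop :=
  ∃ S : Set (X × Y), IsGδ S ∧ graphOf G ⊆ S ∧
    ∀ x : X, ∃ C : Set (X × Y), IsClosed C ∧ ({x} ×ˢ G x) = C ∩ S

/-- `Φ` is a compact approximately connected filtration (of infinite length) of the
multivalued mapping `F`. -/
def CompactApproxConnFiltration {X Y : Type*} [TopologicalSpace X] [TopologicalSpace Y]
    (F : X → Set Y) (Φ : ℕ → X → Set Y) : Prop :=
  (∀ k x, (Φ k x).Nonempty) ∧ (∀ k x, Φ k x ⊆ Φ (k + 1) x) ∧ (∀ k x, Φ k x ⊆ F x) ∧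
    (∀ k, CompactSetMap (Φ k)) ∧ ∀ k x, ApproxAsphericPair k (Φ k x) (Φ (k + 1) x)

/-- `F` admits a compact approximately connected filtration of infinite length. -/
def AdmitsCACFiltration {X Y : Type*} [TopologicalSpace X] [TopologicalSpace Y]
    (F : X → Set Y) : Prop :=
  ∃ Φ : ℕ → X → Set Y, CompactApproxConnFiltration F Φ

/-- A multivalued mapping admits continuous approximations: every neighborhood of its graph
contains the graph of a single-valued continuous map. -/
def AdmitsContinuousApprox {X Y : Type*} [TopologicalSpace X] [TopologicalSpace Y]
    (F : X → Set Y) : Prop :=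
  ∀ O : Set (X × Y), IsOpen O → graphOf F ⊆ O → ∃ f : C(X, Y), ∀ x, (x, f x) ∈ O

/-- A Serre fibration: a continuous surjection having the homotopy lifting property with
respect to all finite-dimensional cubes. -/
def IsSerreFibration {E B : Type*} [TopologicalSpace E] [TopologicalSpace B] (p : E → B) :
    Prop :=
  Continuous p ∧ Function.Surjective p ∧
    ∀ (n : ℕ) (H : C((Fin n → unitInterval) × unitInterval, B))
      (h₀ : C(Fin n → unitInterval, E)),
      (∀ z, p (h₀ z) = H (z, 0)) →
        ∃ G : C((Fin n → unitInterval) × unitInterval, E),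
          (∀ q, p (G q) = H q) ∧ ∀ z, G (z, 0) = h₀ z

/-- A topologically regular mapping: nearby fibers are `ε`-homeomorphic. -/
def TopologicallyRegular {X Y : Type*} [MetricSpace X] [MetricSpace Y] (f : X → Y) : Prop :=
  ∀ ε > (0 : ℝ), ∀ y : Y, ∃ δ > (0 : ℝ), ∀ y' : Y, dist y y' < δ →
    ∃ h : (f ⁻¹' {y} : Set X) ≃ₜ (f ⁻¹' {y'} : Set X),
      ∀ x : (f ⁻¹' {y} : Set X), dist (x : X) ((h x : X)) < ε

/-- A space is locally 0-connected: any neighborhood `V` of a point contains a neighborhood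
`W` such that any two points of `W` can be joined by a path in `V`. -/
def LocallyZeroConnected (Z : Type*) [TopologicalSpace Z] : Prop :=
  ∀ z : Z, ∀ V ∈ 𝓝 z, ∃ W ∈ 𝓝 z, ∀ a ∈ W, ∀ b ∈ W, JoinedIn V a b

def simplexBd {F : Type*} [AddCommGroup F] [Module ℝ F] (t : Finset F) : Set F :=
  ⋃ (t' : Finset F) (_ : t' ⊂ t), convexHull ℝ (t' : Set F)

lemma mem_simplexBd {F : Type*} [AddCommGroup F] [Module ℝ F] {t : Finset F} {z : F} :
    z ∈ simplexBd t ↔ ∃ t' : Finset F, t' ⊂ t ∧ z ∈ convexHull ℝ (t' : Set F) := by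
  simp [simplexBd, Set.mem_iUnion]

lemma simplexBd_subset_hull {F : Type*} [AddCommGroup F] [Module ℝ F] (t : Finset F) :
    simplexBd t ⊆ convexHull ℝ (t : Set F) := by
  intro z hz
  obtain ⟨t', ht', hzt'⟩ := mem_simplexBd.1 hz
  exact convexHull_mono (Finset.coe_subset.2 ht'.subset) hzt'

lemma glueOn {F X : Type*} [TopologicalSpace F] [TopologicalSpace X] {s t : Set F}
    (hs : IsClosed s) (ht : IsClosed t) {φ ψ : F → X} (hφ : ContinuousOn φ s)
    (hψ : ContinuousOn ψ t) (hag : ∀ z ∈ s ∩ t, φ z = ψ z)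
    (Φ : F → X) (hΦ1 : ∀ z ∈ s, Φ z = φ z) (hΦ2 : ∀ z ∉ s, Φ z = ψ z) :
    ContinuousOn Φ (s ∪ t) := by
  have h1 : ∀ z ∈ s, ContinuousWithinAt Φ s z := by
    intro z hz
    exact (hφ z hz).congr (fun y hy => hΦ1 y hy) (hΦ1 z hz)
  have h2 : ∀ z ∈ t, ContinuousWithinAt Φ t z := by
    intro z hz
    refine (hψ z hz).congr (fun y hy => ?_) ?_
    · by_cases h : y ∈ s
      · rw [hΦ1 y h]; exact hag y ⟨h, hy⟩
      · exact hΦ2 y h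
    · by_cases h : z ∈ s
      · rw [hΦ1 z h]; exact hag z ⟨h, hz⟩
      · exact hΦ2 z h
  intro z hz
  by_cases hzs : z ∈ s <;> by_cases hzt : z ∈ t
  · exact (h1 z hzs).union (h2 z hzt)
  · have h3 : ContinuousWithinAt Φ ((s ∪ t) ∩ tᶜ) z :=
      ((h1 z hzs).mono (by intro y hy; rcases hy.1 with h | h; exact h; exact absurd h hy.2))
    rw [continuousWithinAt_inter (ht.isOpen_compl.mem_nhds hzt)] at h3
    exact h3
  · have h3 : ContinuousWithinAt Φ ((s ∪ t) ∩ sᶜ) z :=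
      ((h2 z hzt).mono (by intro y hy; rcases hy.1 with h | h; exact absurd h hy.2; exact h))
    rw [continuousWithinAt_inter (hs.isOpen_compl.mem_nhds hzs)] at h3
    exact h3
  · exact absurd hz (by simp [hzs, hzt])

lemma coneExt {X : Type*} [MetricSpace X] {k : ℕ} {W U : Set X}
    (hpair : AsphericPair k W U) (f : C(NSphere k, X)) (hf : ∀ z, f z ∈ W) :
    ∃ G : EuclideanSpace ℝ (Fin (k + 1)) → X,
      ContinuousOn G (closedBall 0 1) ∧ (∀ z ∈ closedBall (0 : EuclideanSpace ℝ (Fin (k+1))) 1, G z ∈ U) ∧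
      ∀ z (hz : z ∈ Metric.sphere (0 : EuclideanSpace ℝ (Fin (k+1))) 1), G z = f ⟨z, hz⟩ := by
  classical
  obtain ⟨y₀, hy₀, H, hH⟩ := hpair f hf
  set E := EuclideanSpace ℝ (Fin (k + 1))
  have hp₀ : (EuclideanSpace.single (0 : Fin (k+1)) (1:ℝ)) ∈ Metric.sphere (0 : E) 1 := by
    simp [EuclideanSpace.norm_single]
  set p₀ : NSphere k := ⟨_, hp₀⟩
  have hmem : ∀ z : E, z ≠ 0 → (‖z‖⁻¹ • z) ∈ Metric.sphere (0 : E) 1 := by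
    intro z hz
    simp [norm_smul, abs_of_nonneg, inv_mul_cancel₀ (norm_ne_zero_iff.2 hz)]
  set nmap : E → NSphere k := fun z =>
    if h : z = 0 then p₀ else ⟨‖z‖⁻¹ • z, hmem z h⟩ with hnmap
  set G : E → X := fun z =>
    if z = 0 then y₀ else H (projIcc (0:ℝ) 1 zero_le_one (1 - ‖z‖), nmap z) with hG
  have hnmapcont : ContinuousOn nmap {z : E | z ≠ 0} := by
    rw [continuousOn_iff_continuous_restrict]
    have : ({z : E | z ≠ 0}).domRestrict nmap = fun w : {z : E | z ≠ 0} =>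
        (⟨‖w.1‖⁻¹ • w.1, hmem w.1 w.2⟩ : NSphere k) := by
      funext w; simp only [domRestrict_apply, hnmap, dif_neg w.2]
    rw [this]
    refine Continuous.subtype_mk ?_ _
    have hne : ∀ w : {z : E | z ≠ 0}, ‖(w : E)‖ ≠ 0 := fun w => by
      have hw : (w : E) ≠ 0 := w.2
      exact norm_ne_zero_iff.2 hw
    exact ((continuous_subtype_val.norm).inv₀ hne).smul continuous_subtype_val
  have hGcont : ContinuousOn G {z : E | z ≠ 0} := by
    have : ContinuousOn (fun z : E => H (projIcc (0:ℝ) 1 zero_le_one (1 - ‖z‖), nmap z))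
        {z : E | z ≠ 0} := by
      refine H.continuous.comp_continuousOn ?_
      exact ((continuous_projIcc.comp (continuous_const.sub continuous_norm)).continuousOn).prodMk
        hnmapcont
    exact this.congr (fun z hz => by simp only [hG, if_neg hz])
  have hUC : UniformContinuous (H : C(unitInterval × NSphere k, X)) :=
    CompactSpace.uniformContinuous_of_continuous H.continuous
  refine ⟨G, ?_, ?_, ?_⟩
  · intro z hz
    by_cases h0 : z = 0
    · subst h0
      rw [Metric.continuousWithinAt_iff]
      intro ε hε
      obtain ⟨δ, hδ, hδ'⟩ := Metric.uniformContinuous_iff.1 hUC ε hε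
      refine ⟨min δ 1, by positivity, fun z' hz' hd => ?_⟩
      by_cases h0' : z' = 0
      · simp [hG, h0', hε]
      · have hn : ‖z'‖ ≤ 1 := by simpa using hz'
        have hd' : ‖z'‖ < δ := by
          have := hd; rw [dist_zero_right] at this
          exact lt_of_lt_of_le this (min_le_left _ _)
        have : G z' = H (projIcc (0:ℝ) 1 zero_le_one (1 - ‖z'‖), nmap z') := by
          simp [hG, h0']
        rw [this]
        have hG0 : G 0 = y₀ := by simp [hG]
        rw [hG0]
        have happ : (H : C(unitInterval × NSphere k, X)) (1, nmap z') = y₀ := by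
          show H (1, nmap z') = y₀
          simp
        have hcoe : ((projIcc (0:ℝ) 1 zero_le_one (1 - ‖z'‖)) : ℝ) = 1 - ‖z'‖ := by
          rw [Set.coe_projIcc, min_eq_right (by linarith [norm_nonneg z']),
            max_eq_right (by linarith [hn])]
        have hdlt : dist ((projIcc (0:ℝ) 1 zero_le_one (1 - ‖z'‖), nmap z') :
            unitInterval × NSphere k) (1, nmap z') < δ := by
          rw [Prod.dist_eq]
          simp only [dist_self]
          have hdd : dist (projIcc (0:ℝ) 1 zero_le_one (1 - ‖z'‖)) (1 : unitInterval) = ‖z'‖ := by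
            rw [Subtype.dist_eq, hcoe, Real.dist_eq]
            have h1c : ((1 : unitInterval) : ℝ) = 1 := rfl
            rw [h1c, abs_of_nonpos (by linarith [norm_nonneg z'])]
            ring
          simp only [max_lt_iff]
          exact ⟨by rw [hdd]; exact hd', hδ⟩
        have hfin := hδ' hdlt
        rw [happ] at hfin
        exact hfin
    · exact (hGcont.continuousAt (isOpen_ne.mem_nhds h0)).continuousWithinAt
  · intro z _
    by_cases h0 : z = 0
    · simp [hG, h0, hy₀]
    · simp only [hG, if_neg h0]; exact hH _
  · intro z hz
    have h0 : z ≠ 0 := by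
      intro h; rw [h] at hz; simp at hz
    have h1 : ‖z‖ = 1 := by simpa using hz
    have : nmap z = ⟨z, hz⟩ := by
      simp only [hnmap, dif_neg h0]
      exact Subtype.ext (by simp [h1])
    simp only [hG, if_neg h0, this, h1, sub_self]
    have : projIcc (0:ℝ) 1 zero_le_one 0 = 0 := by simp
    rw [this]
    exact H.apply_zero _

lemma frontier_simplex {F : Type*} [NormedAddCommGroup F] [NormedSpace ℝ F]
    [FiniteDimensional ℝ F] (u : Finset F)
    (hu : AffineIndependent ℝ ((↑) : u → F))
    (hspan : affineSpan ℝ (u : Set F) = ⊤) :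
    frontier (convexHull ℝ (u : Set F)) = simplexBd u := by
  classical
  have hrange : Set.range ((↑) : u → F) = (u : Set F) := Subtype.range_coe
  let b : AffineBasis u ℝ F := ⟨(↑), hu, by rw [hrange]; exact hspan⟩
  have hb : Set.range b = (u : Set F) := hrange
  have hhull : convexHull ℝ (u : Set F) = {x | ∀ i, 0 ≤ b.coord i x} := by
    rw [← hb, b.convexHull_eq_nonneg_coord]
  have hint : interior (convexHull ℝ (u : Set F)) = {x | ∀ i, 0 < b.coord i x} := by
    rw [← hb, b.interior_convexHull]
  have hclosed : IsClosed (convexHull ℝ (u : Set F)) :=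
    u.finite_toSet.isClosed_convexHull ℝ
  rw [hclosed.frontier_eq]
  apply Subset.antisymm
  · rintro x ⟨hxh, hxi⟩
    rw [hint] at hxi
    simp only [mem_setOf_eq] at hxi
    push_neg at hxi
    obtain ⟨i₀, hi₀⟩ := hxi
    have hge : ∀ i, 0 ≤ b.coord i x := by rw [hhull] at hxh; exact hxh
    have hzero : b.coord i₀ x = 0 := le_antisymm hi₀ (hge i₀)
    have hsum : ∑ i, b.coord i x = 1 := b.sum_coord_apply_eq_one x
    have hsum' : ∑ i ∈ Finset.univ.erase i₀, b.coord i x = 1 := by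
      rw [Finset.sum_erase_eq_sub (Finset.mem_univ i₀), hsum, hzero, sub_zero]
    have hx : (Finset.univ.erase i₀).affineCombination ℝ b (fun i => b.coord i x) = x := by
      have h1 : Finset.univ.affineCombination ℝ b (fun i => b.coord i x) = x :=
        b.affineCombination_coord_eq_self x
      have h2 : Finset.univ.affineCombination ℝ b
          (Set.indicator ↑(Finset.univ.erase i₀) (fun i => b.coord i x)) =
          Finset.univ.affineCombination ℝ b (fun i => b.coord i x) := by
        apply Finset.affineCombination_congr
        · intro i _
          by_cases h : i = i₀
          · subst h; simp [Set.indicator, hzero]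
          · simp [Set.indicator, h]
        · intro i _; rfl
      rw [Finset.affineCombination_indicator_subset (fun i => b.coord i x) b
        (Finset.univ.erase i₀).subset_univ, h2, h1]
    show x ∈ ⋃ (t' : Finset F) (_ : t' ⊂ u), convexHull ℝ (t' : Set F)
    refine Set.mem_iUnion₂.2 ⟨u.erase ↑i₀, Finset.erase_ssubset i₀.2, ?_⟩
    rw [← hx, affineCombination_eq_centerMass hsum']
    apply Finset.centerMass_mem_convexHull
    · intro i _; exact hge i
    · rw [hsum']; exact one_pos
    · intro i hi
      refine Finset.mem_coe.2 (Finset.mem_erase.2 ⟨?_, i.2⟩)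
      intro h
      have : i = i₀ := Subtype.ext h
      subst this
      simp at hi
  · intro x hx
    have hx' : x ∈ ⋃ (t' : Finset F) (_ : t' ⊂ u), convexHull ℝ (t' : Set F) := hx
    obtain ⟨u', hu', hxu'⟩ := Set.mem_iUnion₂.1 hx'
    obtain ⟨y, hyu, hyu'⟩ := Finset.exists_of_ssubset hu'
    have hzero : b.coord ⟨y, hyu⟩ x = 0 := by
      have hconv : Convex ℝ {z | b.coord ⟨y, hyu⟩ z = 0} :=
        (convex_singleton (0:ℝ)).affine_preimage (b.coord ⟨y, hyu⟩)
      have hsub : (u' : Set F) ⊆ {z | b.coord ⟨y, hyu⟩ z = 0} := by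
        intro v hv
        have hvu : v ∈ u := hu'.1 (Finset.mem_coe.1 hv)
        have hbv : v = b ⟨v, hvu⟩ := rfl
        have hne : (⟨y, hyu⟩ : u) ≠ ⟨v, hvu⟩ := by
          intro h
          apply hyu'
          have : y = v := congrArg Subtype.val h
          rw [this]; exact Finset.mem_coe.1 hv
        show b.coord ⟨y, hyu⟩ v = 0
        rw [hbv, b.coord_apply, if_neg hne]
      exact convexHull_min hsub hconv hxu'
    constructor
    · exact convexHull_mono hu'.1 hxu'
    · rw [hint]
      intro hpos
      have := hpos ⟨y, hyu⟩
      rw [hzero] at this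
      exact lt_irrefl _ this

lemma extendSimplex {X : Type*} [MetricSpace X] {N c : ℕ}
    (t : Finset (EuclideanSpace ℝ (Fin N)))
    (ht : AffineIndependent ℝ ((↑) : t → EuclideanSpace ℝ (Fin N)))
    (hcard : t.card = c + 2) {W U : Set X} (hpair : AsphericPair c W U)
    (φ : EuclideanSpace ℝ (Fin N) → X)
    (hφ : ContinuousOn φ (simplexBd t))
    (hφW : ∀ z ∈ simplexBd t, φ z ∈ W) :
    ∃ ψ : EuclideanSpace ℝ (Fin N) → X,
      ContinuousOn ψ (convexHull ℝ (t : Set (EuclideanSpace ℝ (Fin N)))) ∧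
      (∀ z ∈ convexHull ℝ (t : Set (EuclideanSpace ℝ (Fin N))), ψ z ∈ U) ∧
      ∀ z ∈ simplexBd t, ψ z = φ z := by
  classical
  have htne : t.Nonempty := Finset.card_pos.1 (by omega)
  obtain ⟨b₀, hb₀⟩ := htne
  set D : Submodule ℝ (EuclideanSpace ℝ (Fin N)) :=
    vectorSpan ℝ (t : Set (EuclideanSpace ℝ (Fin N))) with hDdef
  have hD : Module.finrank ℝ D = c + 1 := by
    have hc : Fintype.card t = (c + 1) + 1 := by
      rw [Fintype.card_coe, hcard]
    have h2 := ht.finrank_vectorSpan hc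
    have hsub : vectorSpan ℝ (Set.range (Subtype.val : {x // x ∈ t} → _)) = D := by
      rw [hDdef]
      congr 1
      rw [Subtype.range_coe]
    exact hsub ▸ h2
  set ℓ : D ≃ₗᵢ[ℝ] (EuclideanSpace ℝ (Fin (c+1))) := ((stdOrthonormalBasis ℝ D).reindex (finCongr hD)).repr with hℓ
  set lin_q : (EuclideanSpace ℝ (Fin N)) →ₗ[ℝ] (EuclideanSpace ℝ (Fin (c+1))) :=
    (ℓ.toLinearEquiv.toLinearMap).comp ((D.orthogonalProjectionOnto).toLinearMap) with hlinq
  set lin_j : (EuclideanSpace ℝ (Fin (c+1))) →ₗ[ℝ] (EuclideanSpace ℝ (Fin N)) := D.subtype.comp (ℓ.symm.toLinearEquiv.toLinearMap) with hlinj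
  set qA : (EuclideanSpace ℝ (Fin N)) →ᵃ[ℝ] (EuclideanSpace ℝ (Fin (c+1))) :=
    ⟨fun z => lin_q (z - b₀), lin_q, by
      intro p v
      show lin_q (v + p - b₀) = lin_q v +ᵥ lin_q (p - b₀)
      rw [add_sub_assoc, map_add]; rfl⟩ with hqA
  set jA : (EuclideanSpace ℝ (Fin (c+1))) →ᵃ[ℝ] (EuclideanSpace ℝ (Fin N)) :=
    ⟨fun v => (ℓ.symm v : (EuclideanSpace ℝ (Fin N))) + b₀, lin_j, by
      intro p v
      show ((ℓ.symm (v + p) : D) : (EuclideanSpace ℝ (Fin N))) + b₀ = lin_j v +ᵥ ((ℓ.symm p : (EuclideanSpace ℝ (Fin N))) + b₀)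
      rw [map_add, Submodule.coe_add]
      show _ = (ℓ.symm v : (EuclideanSpace ℝ (Fin N))) + ((ℓ.symm p : (EuclideanSpace ℝ (Fin N))) + b₀)
      rw [add_assoc]⟩ with hjA
  have hqAapp : ∀ z, qA z = lin_q (z - b₀) := fun _ => rfl
  have hjAapp : ∀ v, jA v = (ℓ.symm v : (EuclideanSpace ℝ (Fin N))) + b₀ := fun _ => rfl
  have hqj : ∀ v, qA (jA v) = v := by
    intro v
    rw [hqAapp, hjAapp, add_sub_cancel_right, hlinq]
    simp only [LinearMap.comp_apply, ContinuousLinearMap.coe_coe]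
    rw [Submodule.orthogonalProjectionOnto_mem_subspace_eq_self (ℓ.symm v)]
    exact ℓ.apply_symm_apply v
  have hb₀span : b₀ ∈ affineSpan ℝ (t : Set (EuclideanSpace ℝ (Fin N))) :=
    mem_affineSpan ℝ (Finset.mem_coe.2 hb₀)
  have hjq : ∀ z ∈ (affineSpan ℝ (t : Set (EuclideanSpace ℝ (Fin N))) : Set (EuclideanSpace ℝ (Fin N))), jA (qA z) = z := by
    intro z hz
    have hmem : z - b₀ ∈ D := by
      rw [hDdef, ← direction_affineSpan ℝ (t : Set (EuclideanSpace ℝ (Fin N)))]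
      exact AffineSubspace.vsub_mem_direction hz hb₀span
    rw [hqAapp, hjAapp, hlinq]
    simp only [LinearMap.comp_apply, ContinuousLinearMap.coe_coe]
    have : D.orthogonalProjectionOnto (z - b₀) = ⟨z - b₀, hmem⟩ :=
      Submodule.orthogonalProjectionOnto_mem_subspace_eq_self (⟨z - b₀, hmem⟩ : D)
    rw [this]
    simp only [LinearEquiv.coe_coe, LinearIsometryEquiv.coe_toLinearEquiv]
    rw [ℓ.symm_apply_apply]
    simp
  have hhullspan : convexHull ℝ (t : Set (EuclideanSpace ℝ (Fin N))) ⊆ (affineSpan ℝ (t : Set (EuclideanSpace ℝ (Fin N))) : Set (EuclideanSpace ℝ (Fin N))) :=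
    convexHull_subset_affineSpan _
  have hbd_hull : simplexBd t ⊆ convexHull ℝ (t : Set (EuclideanSpace ℝ (Fin N))) := simplexBd_subset_hull t
  -- the image simplex
  set u : Finset (EuclideanSpace ℝ (Fin (c+1))) := t.image qA with hu
  have hinj : Set.InjOn qA (affineSpan ℝ (t : Set (EuclideanSpace ℝ (Fin N))) : Set (EuclideanSpace ℝ (Fin N))) := by
    intro a ha b hb hab
    rw [← hjq a ha, ← hjq b hb, hab]
  have hinjt : Set.InjOn qA (t : Set (EuclideanSpace ℝ (Fin N))) := hinj.mono (subset_affineSpan ℝ _)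
  have hucard : u.card = c + 2 := by
    rw [hu, Finset.card_image_of_injOn hinjt, hcard]
  have hjmem : ∀ i : u, (jA i : (EuclideanSpace ℝ (Fin N))) ∈ t := by
    rintro ⟨i, hi⟩
    obtain ⟨a, ha, rfl⟩ := Finset.mem_image.1 hi
    show jA (qA a) ∈ t
    rw [hjq a (subset_affineSpan ℝ _ (Finset.mem_coe.2 ha))]
    exact ha
  have hjinj : Function.Injective jA := by
    intro a b hab
    have := congrArg qA hab
    rwa [hqj, hqj] at this
  have hu_indep : AffineIndependent ℝ ((↑) : u → (EuclideanSpace ℝ (Fin (c+1)))) := by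
    set e : u → t := fun i => ⟨jA i, hjmem i⟩ with he
    have heinj : Function.Injective e := by
      intro a b hab
      have : (jA a : (EuclideanSpace ℝ (Fin N))) = jA b := congrArg Subtype.val hab
      exact Subtype.ext (hjinj this)
    have hcomp : (jA : (EuclideanSpace ℝ (Fin (c+1))) →ᵃ[ℝ] (EuclideanSpace ℝ (Fin N))) ∘ ((↑) : u → (EuclideanSpace ℝ (Fin (c+1)))) = ((↑) : t → (EuclideanSpace ℝ (Fin N))) ∘ e := rfl
    apply AffineIndependent.of_comp jA
    rw [hcomp]
    exact ht.comp_embedding ⟨e, heinj⟩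
  have hspanu : affineSpan ℝ (u : Set (EuclideanSpace ℝ (Fin (c+1)))) = ⊤ := by
    have hcardu : Fintype.card u = Module.finrank ℝ (EuclideanSpace ℝ (Fin (c+1))) + 1 := by
      rw [Fintype.card_coe, hucard, finrank_euclideanSpace_fin]
    have := hu_indep.affineSpan_eq_top_iff_card_eq_finrank_add_one.2 hcardu
    rwa [Subtype.range_coe] at this
  -- images of hull and boundary
  have himg_hull : qA '' (convexHull ℝ (t : Set (EuclideanSpace ℝ (Fin N)))) = convexHull ℝ (u : Set (EuclideanSpace ℝ (Fin (c+1)))) := by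
    rw [AffineMap.image_convexHull, hu, Finset.coe_image]
  have himg_bd : qA '' simplexBd t = simplexBd u := by
    apply Subset.antisymm
    · rintro _ ⟨z, hz, rfl⟩
      obtain ⟨t', ht', hzt'⟩ := mem_simplexBd.1 hz
      refine mem_simplexBd.2 ⟨t'.image qA, ?_, ?_⟩
      · have hsub2 : t'.image ⇑qA ⊆ u := Finset.image_subset_image ht'.subset
        have h1 : (t'.image ⇑qA).card < u.card := by
          rw [hucard, ← hcard]
          calc (t'.image ⇑qA).card ≤ t'.card := Finset.card_image_le
            _ < t.card := Finset.card_lt_card ht'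
        exact Finset.ssubset_def.mpr ⟨hsub2, fun h => by have := Finset.card_le_card h; omega⟩
      · rw [Finset.coe_image, ← AffineMap.image_convexHull]
        exact Set.mem_image_of_mem _ hzt'
    · intro w hw
      obtain ⟨u', hu', hwu'⟩ := mem_simplexBd.1 hw
      set t' : Finset (EuclideanSpace ℝ (Fin N)) := u'.image jA with ht'def
      have ht'sub : t' ⊂ t := by
        constructor
        · intro a ha
          obtain ⟨i, hi, rfl⟩ := Finset.mem_image.1 ha
          exact hjmem ⟨i, hu'.subset hi⟩
        · intro hsub
          have hcardlt : t'.card < t.card := by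
            rw [ht'def, Finset.card_image_of_injective _ hjinj, hcard, ← hucard]
            exact Finset.card_lt_card hu'
          have : t.card ≤ t'.card := Finset.card_le_card hsub
          omega
      have hz : jA w ∈ convexHull ℝ (t' : Set (EuclideanSpace ℝ (Fin N))) := by
        rw [ht'def, Finset.coe_image, ← AffineMap.image_convexHull]
        exact Set.mem_image_of_mem _ hwu'
      refine ⟨jA w, mem_simplexBd.2 ⟨t', ht'sub, hz⟩, hqj w⟩
  -- homeomorphism with the ball
  have hfrontu : frontier (convexHull ℝ (u : Set (EuclideanSpace ℝ (Fin (c+1))))) = simplexBd u :=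
    frontier_simplex u hu_indep hspanu
  have hbU : ∃ bU : AffineBasis u ℝ (EuclideanSpace ℝ (Fin (c+1))), Set.range bU = (u : Set (EuclideanSpace ℝ (Fin (c+1)))) := by
    refine ⟨⟨(↑), hu_indep, ?_⟩, Subtype.range_coe⟩
    rw [Subtype.range_coe]; exact hspanu
  obtain ⟨bU, hbUr⟩ := hbU
  have hint_ne : (interior (convexHull ℝ (u : Set (EuclideanSpace ℝ (Fin (c+1)))))).Nonempty := by
    rw [← hbUr]
    exact ⟨_, bU.centroid_mem_interior_convexHull⟩
  have hint_ball : (interior (closedBall (0:(EuclideanSpace ℝ (Fin (c+1)))) 1)).Nonempty := by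
    rw [interior_closedBall (0:(EuclideanSpace ℝ (Fin (c+1)))) one_ne_zero]
    exact ⟨0, mem_ball_self one_pos⟩
  obtain ⟨e, -, hecl, hefr⟩ := exists_homeomorph_image_eq
    (convex_convexHull ℝ (u : Set (EuclideanSpace ℝ (Fin (c+1))))) hint_ne
    ((NormedSpace.isVonNBounded_iff ℝ).2 (isBounded_convexHull.2 u.finite_toSet.isBounded))
    (convex_closedBall (0:(EuclideanSpace ℝ (Fin (c+1)))) 1) hint_ball
    ((NormedSpace.isVonNBounded_iff ℝ).2 isBounded_closedBall)
  have hclosure_u : closure (convexHull ℝ (u : Set (EuclideanSpace ℝ (Fin (c+1))))) = convexHull ℝ (u : Set (EuclideanSpace ℝ (Fin (c+1)))) :=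
    (u.finite_toSet.isClosed_convexHull ℝ).closure_eq
  have hcl : e '' (convexHull ℝ (u : Set (EuclideanSpace ℝ (Fin (c+1))))) = closedBall (0:(EuclideanSpace ℝ (Fin (c+1)))) 1 := by
    rw [← hclosure_u, hecl, isClosed_closedBall.closure_eq]
  have hfr : e '' simplexBd u = sphere (0:(EuclideanSpace ℝ (Fin (c+1)))) 1 := by
    rw [← hfrontu, hefr, frontier_closedBall (0:(EuclideanSpace ℝ (Fin (c+1)))) one_ne_zero]
  -- the sphere map
  have hjcont : Continuous jA := by
    have : (jA : (EuclideanSpace ℝ (Fin (c+1))) → (EuclideanSpace ℝ (Fin N))) = fun v => lin_j v + b₀ := rfl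
    rw [this]
    exact lin_j.continuous_of_finiteDimensional.add continuous_const
  have hqcont : Continuous qA := by
    have : (qA : (EuclideanSpace ℝ (Fin N)) → (EuclideanSpace ℝ (Fin (c+1)))) = fun z => lin_q (z - b₀) := rfl
    rw [this]
    exact lin_q.continuous_of_finiteDimensional.comp (continuous_id.sub continuous_const)
  have hjbd : ∀ w ∈ simplexBd u, jA w ∈ simplexBd t := by
    intro w hw
    rw [← himg_bd] at hw
    obtain ⟨z, hz, rfl⟩ := hw
    rwa [hjq z (hhullspan (hbd_hull hz))]
  have hsymm_mem : ∀ w : NSphere c, jA (e.symm ↑w) ∈ simplexBd t := by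
    intro w
    apply hjbd
    have : (↑w : (EuclideanSpace ℝ (Fin (c+1)))) ∈ e '' simplexBd u := by rw [hfr]; exact w.2
    obtain ⟨v, hv, hvw⟩ := this
    rw [← hvw, e.symm_apply_apply]
    exact hv
  set fS : C(NSphere c, X) :=
    ⟨fun w => φ (jA (e.symm ↑w)), by
      apply hφ.comp_continuous
      · exact hjcont.comp (e.symm.continuous.comp continuous_subtype_val)
      · exact hsymm_mem⟩ with hfS
  have hfSW : ∀ w, fS w ∈ W := fun w => hφW _ (hsymm_mem w)
  obtain ⟨G, hGcont, hGU, hGsph⟩ := coneExt hpair fS hfSW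
  refine ⟨fun z => G (e (qA z)), ?_, ?_, ?_⟩
  · apply hGcont.comp ((e.continuous.comp hqcont).continuousOn)
    intro z hz
    rw [← hcl]
    exact Set.mem_image_of_mem _ (by rw [← himg_hull]; exact Set.mem_image_of_mem _ hz)
  · intro z hz
    apply hGU
    rw [← hcl]
    exact Set.mem_image_of_mem _ (by rw [← himg_hull]; exact Set.mem_image_of_mem _ hz)
  · intro z hz
    have hsph : e (qA z) ∈ sphere (0:(EuclideanSpace ℝ (Fin (c+1)))) 1 := by
      rw [← hfr]
      exact Set.mem_image_of_mem _ (by rw [← himg_bd]; exact Set.mem_image_of_mem _ hz)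
    show G (e (qA z)) = φ z
    rw [hGsph _ hsph]
    show φ (jA (e.symm (e (qA z)))) = φ z
    rw [e.symm_apply_apply, hjq z (hhullspan (hbd_hull hz))]

def USet {N : ℕ} (S : Finset (Finset (EuclideanSpace ℝ (Fin N)))) :
    Set (EuclideanSpace ℝ (Fin N)) :=
  ⋃ s ∈ (S : Set (Finset (EuclideanSpace ℝ (Fin N)))), convexHull ℝ (s : Set _)

lemma mem_USet {N : ℕ} {S : Finset (Finset (EuclideanSpace ℝ (Fin N)))}
    {z : EuclideanSpace ℝ (Fin N)} :
    z ∈ USet S ↔ ∃ s ∈ S, z ∈ convexHull ℝ (s : Set (EuclideanSpace ℝ (Fin N))) := by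
  simp [USet]

lemma USet_isClosed {N : ℕ} (S : Finset (Finset (EuclideanSpace ℝ (Fin N)))) :
    IsClosed (USet S) :=
  Set.Finite.isClosed_biUnion S.finite_toSet
    (fun s _ => s.finite_toSet.isClosed_convexHull ℝ)

lemma mainInduction {X : Type} [MetricSpace X] {N n : ℕ}
    (M A : Geometry.SimplicialComplex ℝ (EuclideanSpace ℝ (Fin N)))
    (hsubA : A.faces ⊆ M.faces)
    (W : ℕ → Set X) (hWmono : ∀ i j, i ≤ j → W i ⊆ W j)
    (hpair : ∀ k ≤ n, AsphericPair k (W k) (W (k + 1)))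
    (x₀ : X) (hx₀ : x₀ ∈ W 0)
    (hdim : ∀ s ∈ M.faces, s.card ≤ n + 1)
    (f : C(A.space, X)) (hf : ∀ a, f a ∈ W 0) :
    ∀ m : ℕ, ∀ S : Finset (Finset (EuclideanSpace ℝ (Fin N))),
      S.card ≤ m → ↑S ⊆ M.faces → A.faces ⊆ ↑S →
      (∀ s ∈ S, ∀ t' ⊆ s, t' ≠ ∅ → t' ∈ S) →
      ∃ φ : EuclideanSpace ℝ (Fin N) → X,
        ContinuousOn φ (USet S) ∧
        (∀ s ∈ S, ∀ z ∈ convexHull ℝ (s : Set (EuclideanSpace ℝ (Fin N))),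
          φ z ∈ W (s.card - 1)) ∧
        (∀ z, ∀ hz : z ∈ A.space, φ z = f ⟨z, hz⟩) := by
  classical
  intro m
  induction m with
  | zero =>
    intro S hcard hSM hAS hdc
    -- S is empty, hence contained in A.faces
    have hS : S = ∅ := Finset.card_eq_zero.1 (Nat.le_zero.1 hcard)
    subst hS
    refine ⟨fun z => if h : z ∈ A.space then f ⟨z, h⟩ else x₀, ?_, ?_, ?_⟩
    · simp [USet]
    · intro s hs; simp at hs
    · intro z hz; simp [hz]
  | succ m ih =>
    intro S hcard hSM hAS hdc
    by_cases hSA : ↑S ⊆ A.faces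
    · -- base situation : everything is in A
      refine ⟨fun z => if h : z ∈ A.space then f ⟨z, h⟩ else x₀, ?_, ?_, ?_⟩
      · have hsubsp : USet S ⊆ A.space := by
          intro z hz
          obtain ⟨s, hs, hzs⟩ := mem_USet.1 hz
          exact Set.mem_biUnion (hSA hs) hzs
        apply ContinuousOn.mono ?_ hsubsp
        rw [continuousOn_iff_continuous_restrict]
        have : (A.space).domRestrict (fun z => if h : z ∈ A.space then f ⟨z, h⟩ else x₀) = f := by
          funext w
          simp only [Set.domRestrict_apply, dif_pos w.2]
        rw [this]
        exact f.continuous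
      · intro s hs z hz
        have hzA : z ∈ A.space := Set.mem_biUnion (hSA hs) hz
        simp only [dif_pos hzA]
        exact hWmono 0 _ (Nat.zero_le _) (hf _)
      · intro z hz; simp [hz]
    · -- there is a face not in A; pick one of maximal cardinality
      obtain ⟨t, htS, htA⟩ := Set.not_subset.1 hSA
      have htS' : t ∈ S := htS
      set T := S.filter (fun s => s ∉ A.faces) with hT
      have hTne : T.Nonempty := ⟨t, Finset.mem_filter.2 ⟨htS', htA⟩⟩
      obtain ⟨t₀, ht₀T, ht₀max⟩ := T.exists_max_image Finset.card hTne
      have ht₀S : t₀ ∈ S := (Finset.mem_filter.1 ht₀T).1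
      have ht₀A : t₀ ∉ A.faces := (Finset.mem_filter.1 ht₀T).2
      have ht₀M : t₀ ∈ M.faces := hSM ht₀S
      have ht₀ne : t₀ ≠ ∅ := fun h => M.empty_notMem (h ▸ ht₀M)
      have ht₀pos : 1 ≤ t₀.card := Finset.card_pos.2 (Finset.nonempty_iff_ne_empty.2 ht₀ne)
      set S' := S.erase t₀ with hS'
      have hS'sub : ↑S' ⊆ M.faces := fun s hs => hSM (Finset.erase_subset _ _ hs)
      have hAS' : A.faces ⊆ ↑S' := by
        intro a ha
        refine Finset.mem_erase.2 ⟨?_, hAS ha⟩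
        intro h; exact ht₀A (h ▸ ha)
      have hdc' : ∀ s ∈ S', ∀ t' ⊆ s, t' ≠ ∅ → t' ∈ S' := by
        intro s hs t' ht' ht'ne
        have hsS : s ∈ S := Finset.erase_subset _ _ hs
        have ht'S : t' ∈ S := hdc s hsS t' ht' ht'ne
        refine Finset.mem_erase.2 ⟨?_, ht'S⟩
        intro h
        subst h
        -- t₀ ⊆ s with s ∈ S', so s ≠ t₀ and s ∉ A.faces, contradicting maximality
        have hne : t' ≠ s := (Finset.mem_erase.1 hs).1.symm
        have hss : t' ⊂ s := ht'.ssubset_of_ne hne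
        have hsA : s ∉ A.faces := by
          intro hsA'
          exact ht₀A (A.down_closed hsA' ht' (Finset.nonempty_iff_ne_empty.2 ht'ne))
        have hsT : s ∈ T := Finset.mem_filter.2 ⟨hsS, hsA⟩
        have := ht₀max s hsT
        have := Finset.card_lt_card hss
        omega
      have hcard' : S'.card ≤ m := by
        have h1 : S'.card = S.card - 1 := by
          rw [hS']; exact Finset.card_erase_of_mem ht₀S
        have h2 : 1 ≤ S.card := Finset.card_pos.2 ⟨t₀, ht₀S⟩
        omega
      obtain ⟨φ', hφ'cont, hφ'W, hφ'f⟩ := ih S' hcard' hS'sub hAS' hdc'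
      -- the new simplex
      set σ := convexHull ℝ (t₀ : Set (EuclideanSpace ℝ (Fin N))) with hσ
      have hbd_sub_S' : ∀ t' : Finset (EuclideanSpace ℝ (Fin N)),
          t' ⊂ t₀ → t' ≠ ∅ → t' ∈ S' := by
        intro t' ht' ht'ne
        have : t' ∈ S := hdc t₀ ht₀S t' ht'.subset ht'ne
        exact Finset.mem_erase.2 ⟨fun h => (h ▸ ht').false, this⟩
      have hbd_eq : σ ∩ USet S' = simplexBd t₀ := by
        apply Subset.antisymm
        · rintro z ⟨hzσ, hzB⟩
          obtain ⟨s, hs, hzs⟩ := mem_USet.1 hzB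
          have hsM : s ∈ M.faces := hS'sub hs
          have hz2 : z ∈ convexHull ℝ ((t₀ : Set (EuclideanSpace ℝ (Fin N))) ∩ ↑s) :=
            M.inter_subset_convexHull ht₀M hsM ⟨hzσ, hzs⟩
          rw [← Finset.coe_inter] at hz2
          refine mem_simplexBd.2 ⟨t₀ ∩ s, ?_, hz2⟩
          refine (Finset.inter_subset_left).ssubset_of_ne ?_
          intro h
          have hts : t₀ ⊆ s := by
            intro a ha
            have haa : a ∈ t₀ ∩ s := by rw [h]; exact ha
            exact (Finset.mem_inter.1 haa).2
          have : t₀ ∈ S' := hdc' s hs t₀ hts ht₀ne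
          exact (Finset.notMem_erase t₀ S) this
        · intro z hz
          obtain ⟨t', ht', hzt'⟩ := mem_simplexBd.1 hz
          have ht'ne : t' ≠ ∅ := by
            intro h
            rw [h] at hzt'
            simp at hzt'
          refine ⟨convexHull_mono (Finset.coe_subset.2 ht'.subset) hzt', ?_⟩
          exact mem_USet.2 ⟨t', hbd_sub_S' t' ht' ht'ne, hzt'⟩
      have hUS_eq : USet S = USet S' ∪ σ := by
        ext z
        rw [mem_USet, Set.mem_union, mem_USet]
        constructor
        · rintro ⟨s, hs, hzs⟩
          by_cases h : s = t₀
          · right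
            show z ∈ convexHull ℝ (t₀ : Set (EuclideanSpace ℝ (Fin N)))
            rw [← h]; exact hzs
          · left; exact ⟨s, Finset.mem_erase.2 ⟨h, hs⟩, hzs⟩
        · rintro (⟨s, hs, hzs⟩ | hzσ)
          · exact ⟨s, Finset.erase_subset _ _ hs, hzs⟩
          · exact ⟨t₀, ht₀S, hzσ⟩
      have hσclosed : IsClosed σ := t₀.finite_toSet.isClosed_convexHull ℝ
      have hB'closed : IsClosed (USet S') := USet_isClosed S'
      have hAsub : A.space ⊆ USet S' := by
        intro z hz
        have hz' : z ∈ ⋃ s ∈ A.faces, convexHull ℝ (s : Set (EuclideanSpace ℝ (Fin N))) := hz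
        obtain ⟨a, ha, hza⟩ := Set.mem_iUnion₂.1 hz'
        exact mem_USet.2 ⟨a, hAS' ha, hza⟩
      -- extension over the new simplex
      have hextend : ∃ ψ : EuclideanSpace ℝ (Fin N) → X, ContinuousOn ψ σ ∧
          (∀ z ∈ σ, ψ z ∈ W (t₀.card - 1)) ∧ ∀ z ∈ simplexBd t₀, ψ z = φ' z := by
        rcases Nat.lt_or_ge t₀.card 2 with hlt | hge
        · -- t₀ is a vertex : boundary is empty
          have hbdempty : simplexBd t₀ = ∅ := by
            apply Set.eq_empty_iff_forall_notMem.2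
            intro z hz
            obtain ⟨t', ht', hzt'⟩ := mem_simplexBd.1 hz
            have : t' ≠ ∅ := by
              intro h; rw [h] at hzt'; simp at hzt'
            have h1 : 1 ≤ t'.card := Finset.card_pos.2 (Finset.nonempty_iff_ne_empty.2 this)
            have h2 := Finset.card_lt_card ht'
            omega
          refine ⟨fun _ => x₀, continuousOn_const, ?_, ?_⟩
          · intro z _
            exact hWmono 0 _ (Nat.zero_le _) hx₀
          · intro z hz; rw [hbdempty] at hz; exact absurd hz (Set.notMem_empty z)
        · obtain ⟨c, hc⟩ : ∃ c, t₀.card = c + 2 := ⟨t₀.card - 2, by omega⟩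
          have hcn : c ≤ n := by
            have := hdim t₀ ht₀M
            omega
          have hφbdcont : ContinuousOn φ' (simplexBd t₀) := by
            apply hφ'cont.mono
            intro z hz
            exact (hbd_eq ▸ hz : z ∈ σ ∩ USet S').2
          have hφbdW : ∀ z ∈ simplexBd t₀, φ' z ∈ W c := by
            intro z hz
            obtain ⟨t', ht', hzt'⟩ := mem_simplexBd.1 hz
            have ht'ne : t' ≠ ∅ := by
              intro h; rw [h] at hzt'; simp at hzt'
            have ht'S' : t' ∈ S' := hbd_sub_S' t' ht' ht'ne
            have := hφ'W t' ht'S' z hzt'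
            have hcard_t' : t'.card ≤ c + 1 := by
              have := Finset.card_lt_card ht'
              omega
            exact hWmono (t'.card - 1) c (by omega) this
          obtain ⟨ψ, hψcont, hψU, hψbd⟩ :=
            extendSimplex t₀ (M.indep ht₀M) hc (hpair c hcn) φ' hφbdcont hφbdW
          refine ⟨ψ, hψcont, ?_, hψbd⟩
          intro z hz
          rw [hc]
          simpa using hψU z hz
      obtain ⟨ψ, hψcont, hψW, hψbd⟩ := hextend
      -- glue
      set φnew : EuclideanSpace ℝ (Fin N) → X :=
        fun z => if z ∈ USet S' then φ' z else ψ z with hφnew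
      have hφnew1 : ∀ z ∈ USet S', φnew z = φ' z := fun z hz => if_pos hz
      have hφnew2 : ∀ z ∉ USet S', φnew z = ψ z := fun z hz => if_neg hz
      have hagree : ∀ z ∈ USet S' ∩ σ, φ' z = ψ z := by
        intro z hz
        have : z ∈ simplexBd t₀ := by
          rw [← hbd_eq]; exact ⟨hz.2, hz.1⟩
        exact (hψbd z this).symm
      refine ⟨φnew, ?_, ?_, ?_⟩
      · rw [hUS_eq]
        exact glueOn hB'closed hσclosed hφ'cont hψcont hagree φnew hφnew1 hφnew2
      · intro s hs z hz
        by_cases h : s = t₀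
        · subst h
          by_cases hzB : z ∈ USet S'
          · rw [hφnew1 z hzB]
            have hzbd : z ∈ simplexBd s := by rw [← hbd_eq]; exact ⟨hz, hzB⟩
            rw [← hψbd z hzbd]
            exact hψW z hz
          · rw [hφnew2 z hzB]
            exact hψW z hz
        · have hsS' : s ∈ S' := Finset.mem_erase.2 ⟨h, hs⟩
          have hzB : z ∈ USet S' := mem_USet.2 ⟨s, hsS', hz⟩
          rw [hφnew1 z hzB]
          exact hφ'W s hsS' z hz
      · intro z hz
        have hzB : z ∈ USet S' := hAsub hz
        rw [hφnew1 z hzB]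
        exact hφ'f z hz


/-- Any `LC^n` separable metric space `X` is locally polyhedrally `n`-connected: for every
`x ∈ X` and every neighborhood `V` of `x` there is a neighborhood `W` of `x` such that the
pair `W ⊆ V` is polyhedrally `n`-connected. -/
theorem LC_implies_locally_polyhedrally_connected
    {X : Type} [MetricSpace X] [TopologicalSpace.SeparableSpace X]
    (n : ℕ) (hX : IsLC n X) :
    ∀ x : X, ∀ V ∈ 𝓝 x, ∃ W ∈ 𝓝 x, W ⊆ V ∧ PolyConnPair n W V := by
  intro x V hV
  choose Wch hmem hsub hpr using hX x
  let D : ℕ → {s : Set X // s ∈ 𝓝 x} := fun i =>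
    Nat.rec ⟨V, hV⟩ (fun _ p => ⟨Wch p.1 p.2, hmem p.1 p.2⟩) i
  have hD0 : (D 0).1 = V := rfl
  have hDsub : ∀ i, (D (i + 1)).1 ⊆ (D i).1 := fun i => hsub _ _
  have hDpair : ∀ i, AsphericPairUpTo n (D (i + 1)).1 (D i).1 := fun i => hpr _ _
  have hDle : ∀ i j, i ≤ j → (D j).1 ⊆ (D i).1 := by
    intro i j h
    induction h with
    | refl => exact subset_rfl
    | step h2 ih => exact (hDsub _).trans ih
  set Wc : ℕ → Set X := fun i => (D (n + 1 - i)).1 with hWc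
  have hWmono : ∀ i j, i ≤ j → Wc i ⊆ Wc j := fun i j h =>
    hDle _ _ (Nat.sub_le_sub_left h _)
  have hWpair : ∀ k ≤ n, AsphericPair k (Wc k) (Wc (k + 1)) := by
    intro k hk
    have h1 : n + 1 - k = (n - k) + 1 := by omega
    have h2 : n + 1 - (k + 1) = n - k := by omega
    have hp := (hDpair (n - k)).2 k hk
    show AsphericPair k (D (n + 1 - k)).1 (D (n + 1 - (k + 1))).1
    rw [h1, h2]
    exact hp
  have hWtop : Wc (n + 1) = V := by
    show (D (n + 1 - (n + 1))).1 = V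
    rw [Nat.sub_self]
    exact hD0
  have hW0nhds : Wc 0 ∈ 𝓝 x := (D (n + 1)).2
  have hW0V : Wc 0 ⊆ V := by
    have h := hDle 0 (n + 1) (Nat.zero_le _)
    rw [hD0] at h
    exact h
  refine ⟨Wc 0, hW0nhds, hW0V, ?_⟩
  intro N M A hfin hdim hsubA f hfW
  have hx₀ : x ∈ Wc 0 := mem_of_mem_nhds hW0nhds
  obtain ⟨φ, hφcont, hφW, hφf⟩ := mainInduction M A hsubA Wc hWmono hWpair x hx₀ hdim f hfW
    hfin.toFinset.card hfin.toFinset le_rfl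
    (by rw [Set.Finite.coe_toFinset])
    (by rw [Set.Finite.coe_toFinset]; exact hsubA)
    (by
      intro s hs t' ht' ht'ne
      rw [Set.Finite.mem_toFinset] at hs ⊢
      exact M.down_closed hs ht' (Finset.nonempty_iff_ne_empty.2 ht'ne))
  have hUSM : USet hfin.toFinset = M.space := by
    rw [USet, Set.Finite.coe_toFinset]
    rfl
  rw [hUSM] at hφcont
  refine ⟨⟨fun w => φ w, continuousOn_iff_continuous_restrict.1 hφcont⟩, ?_, ?_⟩
  · intro w
    obtain ⟨s, hs, hzs⟩ : ∃ s ∈ M.faces,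
        (w : EuclideanSpace ℝ (Fin N)) ∈ convexHull ℝ (s : Set (EuclideanSpace ℝ (Fin N))) := by
      have hw : (w : EuclideanSpace ℝ (Fin N)) ∈
          ⋃ s ∈ M.faces, convexHull ℝ (s : Set (EuclideanSpace ℝ (Fin N))) := w.2
      obtain ⟨s, hs, h⟩ := Set.mem_iUnion₂.1 hw
      exact ⟨s, hs, h⟩
    have h1 := hφW s (hfin.mem_toFinset.2 hs) _ hzs
    have hle : s.card - 1 ≤ n + 1 := by
      have := hdim s hs
      omega
    have h2 := hWmono _ _ hle h1
    rwa [hWtop] at h2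
  · intro z hA hM
    exact hφf z hA


end
end

section
/- Let α be a proper ordering on subsets of a metric space Y and let F: X → Y be a multivalued mapping of a compact metric space X into Y which is equi locally of type α and contains a compact submapping Ψ: X → Y. Then for every ε > 0 there exists δ > 0 such that for every point (x,y) in the open δ-neighborhood O(Γ_Ψ, δ) of the graph of Ψ in X×Y one has (O(y,δ) ∩ F(x)) α (O(y,ε) ∩ F(x)). -/
open Set Metric Topology Filter
open scoped ENNReal

noncomputable section

/-- The graph of an usc compact-valued nonempty-valued map is closed. -/
lemma graphOf_isClosed {X Y : Type*} [TopologicalSpace X] [MetricSpace Y]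
    (Ψ : X → Set Y) (h : UscSetMap Ψ) (hc : ∀ x, IsCompact (Ψ x))
    (hne : ∀ x, (Ψ x).Nonempty) : IsClosed (graphOf Ψ) := by
  rw [← isOpen_compl_iff, isOpen_iff_mem_nhds]
  rintro ⟨x, y⟩ hxy
  have hy : y ∉ Ψ x := hxy
  have hpos : 0 < infDist y (Ψ x) :=
    ((hc x).isClosed.notMem_iff_infDist_pos (hne x)).mp hy
  set r := infDist y (Ψ x) with hr
  have hth : Ψ x ⊆ Metric.thickening (r / 2) (Ψ x) :=
    Metric.self_subset_thickening (by positivity) _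
  have hU : IsOpen {x' | Ψ x' ⊆ Metric.thickening (r / 2) (Ψ x)} :=
    h _ Metric.isOpen_thickening
  have : {x' | Ψ x' ⊆ Metric.thickening (r / 2) (Ψ x)} ×ˢ Metric.ball y (r / 2) ⊆
      (graphOf Ψ)ᶜ := by
    rintro ⟨x', y'⟩ ⟨hx', hy'⟩ hmem
    have hy'' : y' ∈ Metric.thickening (r / 2) (Ψ x) := hx' hmem
    obtain ⟨z, hz, hdz⟩ := Metric.mem_thickening_iff.mp hy''
    have h1 : r ≤ dist y z := Metric.infDist_le_dist_of_mem hz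
    have h2 : dist y z ≤ dist y y' + dist y' z := dist_triangle _ _ _
    have h3 : dist y y' < r / 2 := by
      rw [dist_comm]; exact Metric.mem_ball.mp hy'
    linarith
  exact Filter.mem_of_superset
    (prod_mem_nhds (hU.mem_nhds hth) (Metric.ball_mem_nhds _ (by positivity))) this

/-- The union of values of an usc compact-valued map on a compact space is compact. -/
lemma usc_iUnion_isCompact {X Y : Type*} [TopologicalSpace X] [CompactSpace X]
    [TopologicalSpace Y] (Ψ : X → Set Y) (h : UscSetMap Ψ) (hc : ∀ x, IsCompact (Ψ x)) :
    IsCompact (⋃ x, Ψ x) := by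
  rw [isCompact_iff_finite_subcover]
  intro ι U hU hcov
  classical
  have hx : ∀ x : X, ∃ t : Finset ι, Ψ x ⊆ ⋃ i ∈ t, U i := fun x =>
    (hc x).elim_finite_subcover U hU ((subset_iUnion _ x).trans hcov)
  choose t ht using hx
  have hV : ∀ x : X, IsOpen {x' | Ψ x' ⊆ ⋃ i ∈ t x, U i} := fun x =>
    h _ (isOpen_biUnion fun i _ => hU i)
  obtain ⟨s, hs⟩ := isCompact_univ.elim_finite_subcover
    (fun x : X => {x' | Ψ x' ⊆ ⋃ i ∈ t x, U i}) hV
    (fun x _ => mem_iUnion.2 ⟨x, ht x⟩)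
  refine ⟨s.biUnion t, fun y hy => ?_⟩
  obtain ⟨x, hxy⟩ := mem_iUnion.mp hy
  obtain ⟨x₀, hx₀s, hx₀⟩ := mem_iUnion₂.mp (hs (mem_univ x))
  have : y ∈ ⋃ i ∈ t x₀, U i := hx₀ hxy
  obtain ⟨i, hit, hiy⟩ := mem_iUnion₂.mp this
  exact mem_iUnion₂.2 ⟨i, Finset.mem_biUnion.2 ⟨x₀, hx₀s, hit⟩, hiy⟩

/-- Let `α` be a proper ordering on subsets of a metric space `Y` and let `F : X → Y` be a
multivalued mapping of a compact metric space `X` into `Y` which is equi locally of type `α`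
and contains a compact submapping `Ψ`. Then for every `ε > 0` there exists `δ > 0` such that
for every point `(x, y)` in the open `δ`-neighborhood of the graph of `Ψ` (with respect to
the sum metric on `X × Y`) one has `(O(y,δ) ∩ F x) α (O(y,ε) ∩ F x)`. -/
theorem equi_locally_of_type_uniformization
    {X Y : Type} [MetricSpace X] [CompactSpace X] [MetricSpace Y]
    (α : Set Y → Set Y → Prop) (hα : ProperOrdering α)
    (F : X → Set Y) (hne : ∀ x, (F x).Nonempty)
    (hF : EquiLocallyOfType α F)
    (Ψ : X → Set Y) (hΨne : ∀ x, (Ψ x).Nonempty) (hΨsub : ∀ x, Ψ x ⊆ F x)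
    (hΨ : CompactSetMap Ψ) :
    ∀ ε > (0 : ℝ), ∃ δ > (0 : ℝ), ∀ x : X, ∀ y : Y,
      (x, y) ∈ SumBall (graphOf Ψ) δ →
        α (Metric.ball y δ ∩ F x) (Metric.ball y ε ∩ F x) := by
  intro ε hε
  rcases isEmpty_or_nonempty X with hX | hX
  · exact ⟨1, one_pos, fun x => (IsEmpty.false x).elim⟩
  -- the graph of Ψ is compact
  have hΓclosed : IsClosed (graphOf Ψ) := graphOf_isClosed Ψ hΨ.1 hΨ.2 hΨne
  have hKcomp : IsCompact (⋃ x, Ψ x) := usc_iUnion_isCompact Ψ hΨ.1 hΨ.2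
  have hΓcomp : IsCompact (graphOf Ψ) := by
    refine (isCompact_univ.prod hKcomp).of_isClosed_subset hΓclosed ?_
    rintro ⟨x, y⟩ hp
    exact ⟨mem_univ _, mem_iUnion.2 ⟨x, hp⟩⟩
  -- local data at each point of the graph
  have key : ∀ p : X × Y, p ∈ graphOf Ψ → ∃ r > (0 : ℝ), r ≤ ε / 8 ∧
      ∀ x ∈ Metric.ball p.1 (2 * r),
        α (Metric.ball p.2 (3 * r) ∩ F x) (Metric.ball p.2 (ε / 2) ∩ F x) := by
    rintro ⟨x₀, y₀⟩ hp
    have hy₀ : y₀ ∈ F x₀ := hΨsub x₀ hp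
    obtain ⟨W, hW, U, hU, hprop⟩ :=
      hF x₀ y₀ hy₀ (Metric.ball y₀ (ε / 2)) (Metric.ball_mem_nhds _ (by positivity))
    obtain ⟨r₁, hr₁, hball₁⟩ := Metric.mem_nhds_iff.mp hW
    obtain ⟨r₂, hr₂, hball₂⟩ := Metric.mem_nhds_iff.mp hU
    refine ⟨min (min (r₁ / 3) (r₂ / 2)) (ε / 8), by positivity, min_le_right _ _, ?_⟩
    intro x hx
    set r := min (min (r₁ / 3) (r₂ / 2)) (ε / 8) with hrdef
    have hxU : x ∈ U := by
      apply hball₂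
      have : 2 * r ≤ r₂ := by
        have h1 : r ≤ r₂ / 2 := le_trans (min_le_left _ _) (min_le_right _ _)
        linarith
      exact Metric.ball_subset_ball this hx
    have hWsub : Metric.ball y₀ (3 * r) ⊆ W := by
      refine subset_trans (Metric.ball_subset_ball ?_) hball₁
      have h1 : r ≤ r₁ / 3 := le_trans (min_le_left _ _) (min_le_left _ _)
      linarith
    exact hα.2.1 _ _ _ (inter_subset_inter_left _ hWsub) (hprop x hxU)
  choose! r hrpos hrle hrprop using key
  -- finite subcover of the graph
  obtain ⟨t, ht⟩ := hΓcomp.elim_nhds_subcover'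
    (fun p hp => Metric.ball p.1 (r p) ×ˢ Metric.ball p.2 (r p))
    (fun p hp => prod_mem_nhds (Metric.ball_mem_nhds _ (hrpos p hp))
      (Metric.ball_mem_nhds _ (hrpos p hp)))
  -- the graph is nonempty, hence so is the cover index set
  obtain ⟨x₀⟩ := hX
  obtain ⟨y₀, hy₀⟩ := hΨne x₀
  have hΓne : ((x₀, y₀) : X × Y) ∈ graphOf Ψ := hy₀
  have htne : t.Nonempty := by
    rcases Finset.eq_empty_or_nonempty t with h | h
    · exfalso
      have := ht hΓne
      simp [h] at this
    · exact h
  refine ⟨t.inf' htne (fun p => r (p : X × Y)), ?_, ?_⟩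
  · simp only [gt_iff_lt, Finset.lt_inf'_iff]
    exact fun p hp => hrpos _ p.2
  intro x y hxy
  set δ := t.inf' htne (fun p => r (p : X × Y)) with hδdef
  obtain ⟨q, hqΓ, hq⟩ := hxy
  obtain ⟨p, hpt, hqp⟩ := mem_iUnion₂.mp (ht hqΓ)
  have hδle : δ ≤ r (p : X × Y) := Finset.inf'_le _ hpt
  set ρ := r (p : X × Y) with hρdef
  have hρpos : 0 < ρ := hrpos _ p.2
  have hρε : ρ ≤ ε / 8 := hrle _ p.2
  have hq1 : dist q.1 (p : X × Y).1 < ρ := Metric.mem_ball.mp hqp.1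
  have hq2 : dist q.2 (p : X × Y).2 < ρ := Metric.mem_ball.mp hqp.2
  have hdx : dist x q.1 < δ := lt_of_le_of_lt (le_add_of_nonneg_right dist_nonneg) hq
  have hdy : dist y q.2 < δ := lt_of_le_of_lt (le_add_of_nonneg_left dist_nonneg) hq
  -- x is in the ball where the local property holds
  have hxball : x ∈ Metric.ball (p : X × Y).1 (2 * ρ) := by
    rw [Metric.mem_ball]
    calc dist x (p : X × Y).1 ≤ dist x q.1 + dist q.1 (p : X × Y).1 := dist_triangle _ _ _
      _ < δ + ρ := add_lt_add hdx hq1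
      _ ≤ 2 * ρ := by linarith
  have hmain := hrprop _ p.2 x hxball
  -- ball y δ ⊆ ball p.2 (3ρ)
  have hsub1 : Metric.ball y δ ⊆ Metric.ball (p : X × Y).2 (3 * ρ) := by
    intro z hz
    rw [Metric.mem_ball] at hz ⊢
    calc dist z (p : X × Y).2 ≤ dist z y + dist y q.2 + dist q.2 (p : X × Y).2 :=
          dist_triangle4 _ _ _ _
      _ < δ + δ + ρ := by exact add_lt_add (add_lt_add hz hdy) hq2
      _ ≤ 3 * ρ := by linarith
  -- ball p.2 (ε/2) ⊆ ball y ε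
  have hsub2 : Metric.ball (p : X × Y).2 (ε / 2) ⊆ Metric.ball y ε := by
    intro z hz
    rw [Metric.mem_ball] at hz ⊢
    have h1 : dist (p : X × Y).2 y ≤ dist (p : X × Y).2 q.2 + dist q.2 y :=
      dist_triangle _ _ _
    have h2 : dist (p : X × Y).2 q.2 < ρ := by rwa [dist_comm]
    have h3 : dist q.2 y < δ := by rwa [dist_comm]
    calc dist z y ≤ dist z (p : X × Y).2 + dist (p : X × Y).2 y := dist_triangle _ _ _
      _ < ε / 2 + (ρ + δ) := by linarith
      _ ≤ ε := by linarith
  exact hα.2.2 _ _ _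
    (hα.2.1 _ _ _ (inter_subset_inter_left _ hsub1) hmain)
    (inter_subset_inter_left _ hsub2)

end
end

section
/- Let Z be a locally 0-connected metric space and let G_0 ⊆ G_1 be a coconnected pair of proper subsets of Z. If F_0 ⊆ G_0 is closed in Z, then the G_1-coconnectification of F_0 is also closed in Z. -/
open Set Metric Topology Filter
open scoped ENNReal

noncomputable section

/-- Let `Z` be a locally 0-connected metric space and let `G₀ ⊆ G₁` be a coconnected pair of
proper subsets of `Z`. If `F₀ ⊆ G₀` is closed in `Z`, then the `G₁`-coconnectification of
`F₀` is also closed in `Z`. -/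
theorem coconnectification_isClosed
    {Z : Type} [MetricSpace Z] (hZ : LocallyZeroConnected Z)
    (G₀ G₁ : Set Z) (hG : G₀ ⊆ G₁) (hG₀proper : G₀ ≠ Set.univ) (hG₁proper : G₁ ≠ Set.univ)
    (hcocon : CoconnectedPair G₀ G₁)
    (F₀ : Set Z) (hF₀ : F₀ ⊆ G₀) (hclosed : IsClosed F₀) :
    IsClosed (coconnectification G₁ F₀) := by
  rw [← isOpen_compl_iff]
  rw [isOpen_iff_mem_nhds]
  intro z hz
  have hzF : z ∈ F₀ᶜ := by
    intro hzF₀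
    exact hz (Or.inl hzF₀)
  have hcomp : ¬ connectedComponentIn F₀ᶜ z ⊆ G₁ := by
    intro h
    exact hz (Or.inr ⟨hzF, h⟩)
  have hV : F₀ᶜ ∈ 𝓝 z := hclosed.isOpen_compl.mem_nhds hzF
  obtain ⟨W, hW, hWjoin⟩ := hZ z F₀ᶜ hV
  filter_upwards [hW] with z' hz'
  have hzW : z ∈ W := mem_of_mem_nhds hW
  have hj : JoinedIn F₀ᶜ z z' := hWjoin z hzW z' hz'
  have hz'F : z' ∈ F₀ᶜ := hj.target_mem
  have hmem : z' ∈ connectedComponentIn F₀ᶜ z := by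
    obtain ⟨γ, hγ⟩ := hj
    have hpre : IsPreconnected (Set.range γ) :=
      (isPreconnected_range γ.continuous)
    have hsub : Set.range γ ⊆ connectedComponentIn F₀ᶜ z :=
      hpre.subset_connectedComponentIn ⟨0, γ.source⟩ (by rintro _ ⟨t, rfl⟩; exact hγ t)
    have : γ 1 ∈ connectedComponentIn F₀ᶜ z := hsub ⟨1, rfl⟩
    rwa [γ.target] at this
  have heq : connectedComponentIn F₀ᶜ z' = connectedComponentIn F₀ᶜ z :=
    (connectedComponentIn_eq hmem).symm
  intro hmem'
  rcases hmem' with h | h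
  · exact hz'F h
  · exact hcomp (heq ▸ h.2)

end
end

section
/- Let G_0 ⊆ G_1 be a coconnected pair of proper subsets of a space Z and let F_0 ⊆ G_0. Then the G_1-coconnectification F_1 of F_0 satisfies: F_0 ⊆ F_1 ⊆ G_1, the complement Z \ F_1 is connected and contains Z \ G_1, and F_1 is the minimal such set; that is, if F' is any subset with F_0 ⊆ F' ⊆ G_1 such that Z \ F' is connected and contains Z \ G_1, then F_1 ⊆ F'. -/
open Set Metric Topology Filter
open scoped ENNReal

noncomputable section

/-- Let `G₀ ⊆ G₁` be a coconnected pair of proper subsets of a space `Z` and let `F₀ ⊆ G₀`.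
Then the `G₁`-coconnectification `F₁` of `F₀` satisfies: `F₀ ⊆ F₁ ⊆ G₁`, the complement
`Z \ F₁` is connected and contains `Z \ G₁`, and `F₁` is the minimal such set. -/
theorem coconnectification_spec
    {Z : Type} [TopologicalSpace Z]
    (G₀ G₁ : Set Z) (hG : G₀ ⊆ G₁) (hG₀proper : G₀ ≠ Set.univ) (hG₁proper : G₁ ≠ Set.univ)
    (hcocon : CoconnectedPair G₀ G₁)
    (F₀ : Set Z) (hF₀ : F₀ ⊆ G₀) :
    F₀ ⊆ coconnectification G₁ F₀ ∧
    coconnectification G₁ F₀ ⊆ G₁ ∧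
    IsConnected (coconnectification G₁ F₀)ᶜ ∧
    G₁ᶜ ⊆ (coconnectification G₁ F₀)ᶜ ∧
    ∀ F' : Set Z, F₀ ⊆ F' → F' ⊆ G₁ → IsConnected F'ᶜ → G₁ᶜ ⊆ F'ᶜ →
      coconnectification G₁ F₀ ⊆ F' := by
  obtain ⟨C, hCG₀, hCpre, hG₁C⟩ := hcocon
  obtain ⟨z₀, hz₀⟩ : G₁ᶜ.Nonempty := by
    rw [Set.nonempty_compl]; exact hG₁proper
  have hF₀G₁ : F₀ ⊆ G₁ := hF₀.trans hG
  have hCF₀ : C ⊆ F₀ᶜ := hCG₀.trans (Set.compl_subset_compl.mpr hF₀)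
  have hz₀C : z₀ ∈ C := hG₁C hz₀
  have hz₀F₀ : z₀ ∈ F₀ᶜ := hCF₀ hz₀C
  set D := connectedComponentIn F₀ᶜ z₀ with hD
  have hCD : C ⊆ D := hCpre.subset_connectedComponentIn hz₀C hCF₀
  have hz₀D : z₀ ∈ D := mem_connectedComponentIn hz₀F₀
  -- complement of coconnectification is D
  have hcompl : (coconnectification G₁ F₀)ᶜ = D := by
    ext z
    simp only [coconnectification, Set.mem_compl_iff, Set.mem_union, Set.mem_setOf_eq,
      not_or, not_and]
    constructor
    · rintro ⟨hzF₀, hcomp⟩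
      have hzF₀' : z ∈ F₀ᶜ := hzF₀
      obtain ⟨w, hwcomp, hwG₁⟩ : ∃ w ∈ connectedComponentIn F₀ᶜ z, w ∉ G₁ := by
        by_contra h
        push_neg at h
        exact hcomp hzF₀' h
      have hwC : w ∈ C := hG₁C hwG₁
      have : connectedComponentIn F₀ᶜ z = connectedComponentIn F₀ᶜ w :=
        connectedComponentIn_eq hwcomp
      have hwD : w ∈ D := hCD hwC
      show z ∈ connectedComponentIn F₀ᶜ z₀
      rw [connectedComponentIn_eq hwD, ← this]
      exact mem_connectedComponentIn hzF₀'
    · intro hzD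
      have hzF₀ : z ∈ F₀ᶜ := connectedComponentIn_subset _ _ hzD
      refine ⟨hzF₀, fun _ hsub => ?_⟩
      have : connectedComponentIn F₀ᶜ z = D := (connectedComponentIn_eq hzD).symm
      exact hz₀ (hsub (this ▸ hz₀D))
  refine ⟨Set.subset_union_left, ?_, ?_, ?_, ?_⟩
  · rintro z (hz | ⟨hz1, hz2⟩)
    · exact hF₀G₁ hz
    · exact hz2 (mem_connectedComponentIn hz1)
  · rw [hcompl]
    exact ⟨⟨z₀, hz₀D⟩, isPreconnected_connectedComponentIn⟩
  · rw [hcompl]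
    exact fun z hz => hCD (hG₁C hz)
  · intro F' hF₀F' hF'G₁ hF'conn hG₁F'
    rw [← Set.compl_subset_compl, hcompl]
    have hF'F₀ : F'ᶜ ⊆ F₀ᶜ := Set.compl_subset_compl.mpr hF₀F'
    have hz₀F' : z₀ ∈ F'ᶜ := hG₁F' hz₀
    exact hF'conn.isPreconnected.subset_connectedComponentIn hz₀F' hF'F₀

end
end

section
/- Let F: K → Y be a compact multivalued mapping of a compact metric space K into a metric space Y, and let {Ψ_k: K → Y}_{k=1}^∞ be a sequence of compact submappings of F such that cal(Ψ_k) < 1/2^k for every k and Ψ_m(x) ⊆ O(Ψ_k(x), 3/2^k) for all m ≥ k ≥ 1 and all x ∈ K. Then for every x ∈ K the sequence of compacta {Ψ_k(x)} is Cauchy in the Hausdorff metric and converges to a single point s(x) ∈ F(x), and the resulting single-valued map s: K → Y is a continuous selection of F. -/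
open Set Metric Topology Filter
open scoped ENNReal

noncomputable section

/-- Let `F : K → Y` be a compact multivalued mapping of a compact metric space `K` into a
metric space `Y`, and let `{Ψ_k}` be a sequence of compact submappings of `F` such that
`cal Ψ_k < 1/2^k` for every `k ≥ 1` and `Ψ_m x ⊆ O(Ψ_k x, 3/2^k)` for all `m ≥ k ≥ 1` and
all `x`. Then for every `x` the sequence of compacta `{Ψ_k x}` is Cauchy in the Hausdorff
metric and converges to a single point `s x ∈ F x`, and the resulting single-valued map
`s : K → Y` is a continuous selection of `F`. -/
theorem limit_of_shrinking_submappings_is_selection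
    {K Y : Type} [MetricSpace K] [CompactSpace K] [MetricSpace Y]
    (F : K → Set Y) (hne : ∀ x, (F x).Nonempty) (hF : CompactSetMap F)
    (Ψ : ℕ → K → Set Y)
    (hΨne : ∀ k, 1 ≤ k → ∀ x, (Ψ k x).Nonempty)
    (hΨsub : ∀ k, 1 ≤ k → ∀ x, Ψ k x ⊆ F x)
    (hΨcomp : ∀ k, 1 ≤ k → CompactSetMap (Ψ k))
    (hcal : ∀ k, 1 ≤ k → calGauge (Ψ k) < ENNReal.ofReal (1 / 2 ^ k))
    (happrox : ∀ m k, 1 ≤ k → k ≤ m → ∀ x,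
      Ψ m x ⊆ Metric.thickening ((3 : ℝ) / 2 ^ k) (Ψ k x)) :
    ∃ s : C(K, Y), (∀ x, s x ∈ F x) ∧
      (∀ x, ∀ ε > (0 : ℝ), ∃ N : ℕ, ∀ m ≥ N, ∀ n ≥ N,
        Metric.hausdorffDist (Ψ m x) (Ψ n x) < ε) ∧
      ∀ x, Filter.Tendsto (fun k => Metric.hausdorffDist (Ψ k x) {s x})
        Filter.atTop (𝓝 0) := by
  classical
  -- diameter bound for `Ψ k x`
  have hdiam : ∀ k, 1 ≤ k → ∀ x, ∀ a ∈ Ψ k x, ∀ b ∈ Ψ k x, dist a b ≤ 1 / 2 ^ k := by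
    intro k hk x a ha b hb
    have h1 : EMetric.diam (Ψ k x) < ENNReal.ofReal (1 / 2 ^ k) :=
      lt_of_le_of_lt (le_iSup (fun x => EMetric.diam (Ψ k x)) x) (hcal k hk)
    have h2 : edist a b < ENNReal.ofReal (1 / 2 ^ k) :=
      lt_of_le_of_lt (EMetric.edist_le_diam_of_mem ha hb) h1
    rw [edist_dist] at h2
    have := (ENNReal.ofReal_lt_ofReal_iff (by positivity)).1 h2
    linarith
  -- a choice of point in each `Ψ (k+1) x`
  set z : ℕ → K → Y := fun k x => (hΨne (k + 1) (by omega) x).choose with hzdef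
  have hz : ∀ k x, z k x ∈ Ψ (k + 1) x := fun k x => (hΨne (k + 1) (by omega) x).choose_spec
  have hzd : ∀ x k m, k ≤ m → dist (z m x) (z k x) ≤ 2 / 2 ^ k := by
    intro x k m hkm
    have h1 : z m x ∈ Metric.thickening ((3 : ℝ) / 2 ^ (k + 1)) (Ψ (k + 1) x) :=
      happrox (m + 1) (k + 1) (by omega) (by omega) x (hz m x)
    rw [Metric.mem_thickening_iff] at h1
    obtain ⟨w, hw, hd⟩ := h1
    have h2 : dist w (z k x) ≤ 1 / 2 ^ (k + 1) :=
      hdiam (k + 1) (by omega) x w hw (z k x) (hz k x)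
    have h3 := dist_triangle (z m x) w (z k x)
    have h4 : (3 : ℝ) / 2 ^ (k + 1) + 1 / 2 ^ (k + 1) = 2 / 2 ^ k := by ring
    linarith
  have hcauchy : ∀ x, CauchySeq (fun k => z k x) := by
    intro x
    apply cauchySeq_of_le_geometric (1 / 2 : ℝ) 2 (by norm_num)
    intro n
    have h1 := hzd x n (n + 1) (by omega)
    have h2 : ((1 : ℝ) / 2) ^ n = 1 / 2 ^ n := by rw [div_pow, one_pow]
    rw [dist_comm] at h1
    rw [h2, mul_one_div]
    exact h1
  choose s hsF hslim using fun x =>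
    cauchySeq_tendsto_of_isComplete (hF.2 x).isComplete
      (fun k => hΨsub (k + 1) (by omega) x (hz k x)) (hcauchy x)
  have hzs : ∀ x k, dist (s x) (z k x) ≤ 2 / 2 ^ k := by
    intro x k
    have ht : Tendsto (fun m => dist (z m x) (z k x)) atTop (𝓝 (dist (s x) (z k x))) :=
      (hslim x).dist tendsto_const_nhds
    exact le_of_tendsto ht (eventually_atTop.2 ⟨k, fun m hm => hzd x k m hm⟩)
  -- continuity of `s`
  have hcont : Continuous s := by
    rw [Metric.continuous_iff]
    intro x ε hε
    obtain ⟨k, hk⟩ : ∃ k : ℕ, (5 : ℝ) / 2 ^ k < ε / 2 := by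
      obtain ⟨k, hk⟩ := exists_pow_lt_of_lt_one (show (0 : ℝ) < ε / 10 by linarith)
        (by norm_num : (1 : ℝ) / 2 < 1)
      refine ⟨k, ?_⟩
      have h2 : ((1 : ℝ) / 2) ^ k = 1 / 2 ^ k := by rw [div_pow, one_pow]
      rw [h2] at hk
      have hp : (0:ℝ) < 2 ^ k := by positivity
      rw [div_lt_div_iff₀ hp (by norm_num)] at hk
      rw [div_lt_div_iff₀ hp (by norm_num)]
      linarith
    set U : Set Y := Metric.thickening (ε / 2) (Ψ (k + 1) x) with hU
    have hUopen : IsOpen {x' | Ψ (k + 1) x' ⊆ U} :=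
      (hΨcomp (k + 1) (by omega)).1 U Metric.isOpen_thickening
    have hxU : x ∈ {x' | Ψ (k + 1) x' ⊆ U} :=
      Metric.self_subset_thickening (by linarith) _
    obtain ⟨δ, hδ, hball⟩ := Metric.isOpen_iff.1 hUopen x hxU
    refine ⟨δ, hδ, fun x' hx' => ?_⟩
    have hx'U : Ψ (k + 1) x' ⊆ U := hball hx'
    have hzU : z k x' ∈ U := hx'U (hz k x')
    rw [hU, Metric.mem_thickening_iff] at hzU
    obtain ⟨w, hw, hdw⟩ := hzU
    have h1 := hzs x' k
    have h2 := hzs x k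
    have h3 : dist w (z k x) ≤ 1 / 2 ^ (k + 1) :=
      hdiam (k + 1) (by omega) x w hw (z k x) (hz k x)
    have t1 := dist_triangle4 (s x') (z k x') w (s x)
    have t2 := dist_triangle w (z k x) (s x)
    have h5 : dist (s x') (z k x') = dist (s x') (z k x') := rfl
    have h6 : dist (z k x) (s x) ≤ 2 / 2 ^ k := by rw [dist_comm]; exact h2
    have hle : (1 : ℝ) / 2 ^ (k + 1) ≤ 1 / 2 ^ k := by
      apply div_le_div_of_nonneg_left (by norm_num) (by positivity)
      exact pow_le_pow_right₀ (by norm_num) (by omega)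
    have e1 : (5 : ℝ) / 2 ^ k = 2 / 2 ^ k + 1 / 2 ^ k + 2 / 2 ^ k := by ring
    linarith [hdw.le]
  -- key Hausdorff bound
  have key : ∀ x k m n, 1 ≤ k → k ≤ m → k ≤ n →
      ∀ a ∈ Ψ m x, ∃ b ∈ Ψ n x, dist a b ≤ 7 / 2 ^ k := by
    intro x k m n hk hm hn a ha
    have h1 := happrox m k hk hm x ha
    rw [Metric.mem_thickening_iff] at h1
    obtain ⟨w, hw, hdw⟩ := h1
    obtain ⟨b, hb⟩ := hΨne n (by omega) x
    have h2 := happrox n k hk hn x hb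
    rw [Metric.mem_thickening_iff] at h2
    obtain ⟨w', hw', hdw'⟩ := h2
    have h3 := hdiam k hk x w hw w' hw'
    refine ⟨b, hb, ?_⟩
    have t := dist_triangle4 a w w' b
    have h4 : dist w' b = dist b w' := dist_comm _ _
    have h5 : (3 : ℝ) / 2 ^ k + 1 / 2 ^ k + 3 / 2 ^ k = 7 / 2 ^ k := by ring
    linarith
  have hHD : ∀ x k m n, 1 ≤ k → k ≤ m → k ≤ n →
      Metric.hausdorffDist (Ψ m x) (Ψ n x) ≤ 7 / 2 ^ k := by
    intro x k m n hk hm hn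
    exact Metric.hausdorffDist_le_of_mem_dist (by positivity)
      (key x k m n hk hm hn)
      (fun b hb => by
        obtain ⟨a, ha, hab⟩ := key x k n m hk hn hm b hb
        exact ⟨a, ha, hab⟩)
  -- bound for distance from `Ψ k x` to `s x`
  have hsel : ∀ x k, 1 ≤ k → ∀ a ∈ Ψ k x, dist a (s x) ≤ 6 / 2 ^ k := by
    intro x k hk a ha
    have h1 := happrox (k + 1) k hk (by omega) x (hz k x)
    rw [Metric.mem_thickening_iff] at h1
    obtain ⟨w, hw, hdw⟩ := h1
    have h2 : dist a w ≤ 1 / 2 ^ k := hdiam k hk x a ha w hw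
    have h3 := hzs x k
    have t := dist_triangle4 a w (z k x) (s x)
    have h4 : dist w (z k x) = dist (z k x) w := dist_comm _ _
    have h5 : dist (z k x) (s x) = dist (s x) (z k x) := dist_comm _ _
    have h6 : (1 : ℝ) / 2 ^ k + 3 / 2 ^ k + 2 / 2 ^ k = 6 / 2 ^ k := by ring
    linarith
  have hlast : ∀ x k, 1 ≤ k → Metric.hausdorffDist (Ψ k x) {s x} ≤ 6 / 2 ^ k := by
    intro x k hk
    apply Metric.hausdorffDist_le_of_mem_dist (by positivity)
    · intro a ha
      exact ⟨s x, rfl, hsel x k hk a ha⟩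
    · intro y hy
      rw [Set.mem_singleton_iff] at hy
      subst hy
      obtain ⟨a, ha⟩ := hΨne k hk x
      exact ⟨a, ha, by rw [dist_comm]; exact hsel x k hk a ha⟩
  refine ⟨⟨s, hcont⟩, fun x => hsF x, ?_, ?_⟩
  · intro x ε hε
    obtain ⟨k, hk⟩ : ∃ k : ℕ, (7 : ℝ) / 2 ^ k < ε := by
      obtain ⟨k, hk⟩ := exists_pow_lt_of_lt_one (show (0 : ℝ) < ε / 7 by linarith)
        (by norm_num : (1 : ℝ) / 2 < 1)
      refine ⟨k, ?_⟩
      have h2 : ((1 : ℝ) / 2) ^ k = 1 / 2 ^ k := by rw [div_pow, one_pow]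
      rw [h2] at hk
      have hp : (0:ℝ) < 2 ^ k := by positivity
      rw [div_lt_div_iff₀ hp (by norm_num)] at hk
      rw [div_lt_iff₀ hp]
      linarith
    refine ⟨k + 1, fun m hm n hn => ?_⟩
    have hle : (7 : ℝ) / 2 ^ (k + 1) ≤ 7 / 2 ^ k := by
      apply div_le_div_of_nonneg_left (by norm_num) (by positivity)
      exact pow_le_pow_right₀ (by norm_num) (by omega)
    exact lt_of_le_of_lt (hHD x (k + 1) m n (by omega) (by omega) (by omega))
      (lt_of_le_of_lt hle hk)
  · intro x
    have htend : Tendsto (fun k : ℕ => (6 : ℝ) / 2 ^ k) atTop (𝓝 0) := by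
      have h1 : Tendsto (fun k : ℕ => ((1 : ℝ) / 2) ^ k) atTop (𝓝 0) :=
        tendsto_pow_atTop_nhds_zero_of_lt_one (by norm_num) (by norm_num)
      have h2 := h1.const_mul (6 : ℝ)
      rw [mul_zero] at h2
      convert h2 using 2 with k
      rw [div_pow, one_pow]
      ring
    refine squeeze_zero' (Filter.Eventually.of_forall fun k => Metric.hausdorffDist_nonneg) ?_ htend
    exact eventually_atTop.2 ⟨1, fun k hk => hlast x k hk⟩

end
end
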